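/- The angle structure space A_T is a nonempty, convex, bounded subset of ℝ^{3|F|}, and the maximum of 𝓔 over its closure is attained uniquely at the angle structure where every angle equals π/3. -/

import Mathlib

open Real MeasureTheory intervalIntegral

/-- The Lobachevsky function. -/
noncomputable def lob (x : ℝ) : ℝ := -∫ t in (0:ℝ)..x, Real.log |2 * Real.sin t|

namespace LobAux

open Set


noncomputable def g (t : ℝ) : ℝ := Real.log |2 * Real.sin t|

lemma lob_eq (x : ℝ) : lob x = -∫ t in (0:ℝ)..x, g t := rfl

lemma g_meas : Measurable g :=
  Real.measurable_log.comp ((measurable_const.mul Real.measurable_sin).abs)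

/-- helper: for `0 < w ≤ π/2` with `2 sin w < 1`, `-log (2 sin w) ≤ 2 * w ^ (-1/2)`. -/
lemma H {w : ℝ} (hw : 0 < w) (hw2 : w ≤ π / 2) (hs : 2 * Real.sin w < 1) :
    -Real.log (2 * Real.sin w) ≤ 2 * w ^ (-(1/2) : ℝ) := by
  rcases le_or_gt w 1 with h1 | h1
  · have hcube := Real.sin_gt_sub_cube hw
    have hw3 : w ^ 3 ≤ w := by nlinarith [sq_nonneg w, sq_nonneg (1 - w)]
    have hsin : w / 2 ≤ Real.sin w := by nlinarith
    have hw_le : w ≤ 2 * Real.sin w := by linarith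
    have hlog1 : Real.log w ≤ Real.log (2 * Real.sin w) := Real.log_le_log hw hw_le
    have hspos : (0:ℝ) < w ^ (-(1/2) : ℝ) := Real.rpow_pos_of_pos hw _
    have hlog2 : Real.log (w ^ (-(1/2):ℝ)) = (-(1/2)) * Real.log w := Real.log_rpow hw _
    have hle : Real.log (w ^ (-(1/2):ℝ)) ≤ w ^ (-(1/2):ℝ) - 1 :=
      Real.log_le_sub_one_of_pos hspos
    nlinarith
  · exfalso
    have h34 : (3:ℝ)/4 < Real.sin 1 := by
      have := Real.sin_gt_sub_cube (by norm_num : (0:ℝ) < 1)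
      norm_num at this
      linarith
    have hpi : (1:ℝ) ≤ π / 2 := by linarith [Real.two_le_pi]
    have hmono : Real.sin 1 ≤ Real.sin w := by
      apply Real.strictMonoOn_sin.monotoneOn _ _ h1.le
      · constructor <;> [linarith [Real.pi_pos]; exact hpi]
      · constructor <;> [linarith [Real.pi_pos]; exact hw2]
    linarith

lemma intg0pi : IntervalIntegrable g volume 0 π := by
  set M : ℝ → ℝ := fun t => 2 * t ^ (-(1/2) : ℝ) + 2 * (π - t) ^ (-(1/2) : ℝ) + 2 with hM
  have hMint : IntervalIntegrable M volume 0 π := by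
    apply IntervalIntegrable.add
    apply IntervalIntegrable.add
    · exact (intervalIntegrable_rpow' (by norm_num)).const_mul 2
    · have := (intervalIntegrable_rpow' (a := π) (b := 0) (r := (-(1/2):ℝ))
        (by norm_num)).comp_sub_left π
      simpa using this.const_mul 2
    · exact intervalIntegrable_const
  apply hMint.mono_fun g_meas.aestronglyMeasurable
  rw [Set.uIoc_of_le Real.pi_pos.le]
  filter_upwards [ae_restrict_mem measurableSet_Ioc] with t ht
  have ht0 : 0 < t := ht.1
  have htpi : t ≤ π := ht.2
  have hsin0 : 0 ≤ Real.sin t := Real.sin_nonneg_of_nonneg_of_le_pi ht0.le htpi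
  have hM1 : (0:ℝ) ≤ 2 * t ^ (-(1/2) : ℝ) := by positivity
  have hM2 : (0:ℝ) ≤ 2 * (π - t) ^ (-(1/2) : ℝ) := by
    have : (0:ℝ) ≤ π - t := by linarith
    positivity
  have hMnn : 0 ≤ M t := by simp only [hM]; linarith
  rw [Real.norm_eq_abs, Real.norm_eq_abs, abs_of_nonneg hMnn]
  have habs : |2 * Real.sin t| = 2 * Real.sin t := abs_of_nonneg (by linarith)
  show |g t| ≤ M t
  rcases le_or_gt 1 (2 * Real.sin t) with hu | hu
  · -- big value: log between 0 and 1
    have h2 : Real.log (2 * Real.sin t) ≤ 2 * Real.sin t - 1 :=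
      Real.log_le_sub_one_of_pos (by linarith)
    have h3 : 0 ≤ Real.log (2 * Real.sin t) := Real.log_nonneg hu
    have : |g t| = Real.log (2 * Real.sin t) := by
      rw [show g t = Real.log |2 * Real.sin t| from rfl, habs, abs_of_nonneg h3]
    rw [this]
    have : Real.sin t ≤ 1 := Real.sin_le_one t
    simp only [hM]; linarith
  · rcases eq_or_lt_of_le hsin0 with h0 | h0
    · have : g t = 0 := by
        simp [g, ← h0]
      rw [this, abs_zero]; exact hMnn
    · -- small positive value
      have hgneg : Real.log (2 * Real.sin t) < 0 := Real.log_neg (by linarith) hu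
      have habs2 : |g t| = -Real.log (2 * Real.sin t) := by
        rw [show g t = Real.log |2 * Real.sin t| from rfl, habs, abs_of_neg hgneg]
      rw [habs2]
      rcases le_or_gt t (π/2) with hhalf | hhalf
      · have := H ht0 hhalf hu
        simp only [hM]; linarith
      · have hw0 : 0 < π - t := by
          by_contra h
          push_neg at h
          have : t = π := le_antisymm htpi (by linarith)
          rw [this] at h0; simp at h0
        have hw2 : π - t ≤ π / 2 := by linarith
        have hsin_eq : Real.sin (π - t) = Real.sin t := Real.sin_pi_sub t
        have := H hw0 hw2 (by rw [hsin_eq]; exact hu)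
        rw [hsin_eq] at this
        simp only [hM]; linarith



lemma subI {a b : ℝ} (ha : 0 ≤ a) (ha' : a ≤ π) (hb : 0 ≤ b) (hb' : b ≤ π) :
    IntervalIntegrable g volume a b := by
  refine intg0pi.mono_set (Set.uIcc_subset_uIcc ?_ ?_) <;>
    rw [Set.uIcc_of_le Real.pi_pos.le]
  exacts [⟨ha, ha'⟩, ⟨hb, hb'⟩]

lemma lob_contOn : ContinuousOn lob (Icc 0 π) := by
  have h : IntegrableOn g (Set.uIcc 0 π) volume := by
    rw [Set.uIcc_of_le Real.pi_pos.le]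
    have h1 : IntegrableOn g (Set.Ioc 0 π) volume := by
      rw [← intervalIntegrable_iff_integrableOn_Ioc_of_le Real.pi_pos.le]
      exact intg0pi
    have h2 : IntegrableOn g {0} volume := (integrableOn_singleton_iff).mpr
      (Or.inr (by simp))
    have : Icc (0:ℝ) π = {0} ∪ Ioc 0 π := by
      rw [← Set.Icc_union_Ioc_eq_Icc le_rfl Real.pi_pos.le, Set.Icc_self]
    rw [this]
    exact h2.union h1
  have := (intervalIntegral.continuousOn_primitive_interval (a := 0) (b := π)
    (μ := volume) (f := g) h).neg
  rw [Set.uIcc_of_le Real.pi_pos.le] at this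
  exact this

lemma lob_zero : lob 0 = 0 := by simp [lob]

lemma lob_hasDeriv {x : ℝ} (hx : 0 < x) (hx' : x < π) :
    HasDerivAt lob (-Real.log |2 * Real.sin x|) x := by
  have hsin : 0 < Real.sin x := Real.sin_pos_of_pos_of_lt_pi hx hx'
  have habs : |2 * Real.sin x| ≠ 0 := by
    rw [abs_ne_zero]; positivity
  have hcont : ContinuousAt g x := by
    show ContinuousAt (fun t => Real.log |2 * Real.sin t|) x
    exact ContinuousAt.log
      ((continuous_abs.comp (continuous_const.mul Real.continuous_sin)).continuousAt) habs
  have := intervalIntegral.integral_hasDerivAt_right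
    (subI le_rfl Real.pi_pos.le hx.le hx'.le)
    (g_meas.stronglyMeasurable.stronglyMeasurableAtFilter)
    hcont
  exact this.neg

lemma sin_lt_sin {x y : ℝ} (hx : 0 < x) (hxy : x < y) (hsum : x + y < π) :
    Real.sin x < Real.sin y := by
  rcases le_or_gt y (π/2) with h | h
  · apply Real.strictMonoOn_sin _ _ hxy
    · exact ⟨by linarith [Real.pi_pos], by linarith⟩
    · exact ⟨by linarith [Real.pi_pos], h⟩
  · rw [← Real.sin_pi_sub y]
    apply Real.strictMonoOn_sin _ _ (by linarith)
    · exact ⟨by linarith [Real.pi_pos], by linarith⟩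
    · exact ⟨by linarith [Real.pi_pos], by linarith⟩

lemma pairMono {s : ℝ} (hs0 : 0 < s) (hsπ : s < π) :
    StrictMonoOn (fun x => lob x + lob (s - x)) (Icc 0 (s/2)) := by
  apply strictMonoOn_of_deriv_pos (convex_Icc _ _)
  · apply ContinuousOn.add
    · apply lob_contOn.mono
      intro x hx
      obtain ⟨h1, h2⟩ := hx
      exact ⟨h1, by linarith⟩
    · apply lob_contOn.comp (Continuous.continuousOn (by continuity))
      intro x hx
      simp only [Set.mem_Icc] at hx ⊢
      constructor <;> linarith [hx.1, hx.2]
  · rw [interior_Icc]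
    intro x hx
    obtain ⟨hx0, hx2⟩ := hx
    have hxs : x < s - x := by linarith
    have hxpi : x < π := by linarith
    have hsxpi : s - x < π := by linarith
    have hsx0 : 0 < s - x := by linarith
    have h1 := lob_hasDeriv hx0 hxpi
    have hinner : HasDerivAt (fun y : ℝ => s - y) (-1) x := (hasDerivAt_id x).const_sub s
    have h2 : HasDerivAt (fun y => lob (s - y))
        (-Real.log |2 * Real.sin (s - x)| * (-1)) x :=
      (lob_hasDeriv hsx0 hsxpi).comp x hinner
    have hD : HasDerivAt (fun x => lob x + lob (s - x))
        (-Real.log |2 * Real.sin x| + -Real.log |2 * Real.sin (s - x)| * (-1)) x :=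
      h1.add h2
    rw [hD.deriv]
    have hs1 : 0 < Real.sin x := Real.sin_pos_of_pos_of_lt_pi hx0 hxpi
    have hs2 : Real.sin x < Real.sin (s - x) := sin_lt_sin hx0 hxs (by linarith)
    have hlog : Real.log |2 * Real.sin x| < Real.log |2 * Real.sin (s - x)| := by
      rw [abs_of_pos (by linarith), abs_of_pos (by linarith)]
      exact Real.log_lt_log (by linarith) (by linarith)
    linarith



lemma g_pi_sub (t : ℝ) : g (π - t) = g t := by
  simp only [g, Real.sin_pi_sub]

lemma lob_pi_sub {y : ℝ} (hy : 0 ≤ y) (hy' : y ≤ π) : lob (π - y) = lob π - lob y := by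
  have h1 : (∫ t in (0:ℝ)..y, g (π - t)) = ∫ t in (π - y)..(π - 0), g t :=
    intervalIntegral.integral_comp_sub_left g π
  have h2 : (∫ t in (0:ℝ)..y, g (π - t)) = ∫ t in (0:ℝ)..y, g t := by
    congr 1
    ext t
    exact g_pi_sub t
  have h3 : (∫ t in (0:ℝ)..(π - y), g t) + ∫ t in (π - y)..π, g t = ∫ t in (0:ℝ)..π, g t :=
    intervalIntegral.integral_add_adjacent_intervals
      (subI le_rfl Real.pi_pos.le (by linarith) (by linarith))
      (subI (by linarith) (by linarith) Real.pi_pos.le le_rfl)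
  simp only [sub_zero] at h1
  simp only [lob_eq]
  have := h2.symm.trans h1
  linarith [this, h3]

lemma dup {x : ℝ} (hx : 0 ≤ x) (hx' : x ≤ π / 2) :
    lob (2 * x) = 2 * lob x + 2 * lob (x + π / 2) - 2 * lob (π / 2) := by
  have h2x : 2 * x ≤ π := by linarith
  -- substitution u = 2t
  have h1 : (∫ t in (0:ℝ)..x, g (2 * t)) = (2:ℝ)⁻¹ • ∫ u in (2*(0:ℝ))..(2*x), g u :=
    intervalIntegral.integral_comp_mul_left g two_ne_zero
  -- split the integrand a.e.
  have hae : ∀ᵐ t : ℝ ∂volume, t ∈ Set.uIoc 0 x → g (2 * t) = g t + g (t + π / 2) := by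
    have hne : ∀ᵐ t : ℝ ∂volume, t ≠ π / 2 := by
      rw [MeasureTheory.ae_iff]
      have : {t : ℝ | ¬t ≠ π / 2} = {π / 2} := by ext t; simp
      rw [this]
      exact Real.volume_singleton
    filter_upwards [hne] with t hne ht
    rw [Set.uIoc_of_le hx] at ht
    have ht0 : 0 < t := ht.1
    have htx : t ≤ x := ht.2
    have htlt : t < π / 2 := lt_of_le_of_ne (le_trans htx hx') hne
    have hsin : 0 < Real.sin t := Real.sin_pos_of_pos_of_lt_pi ht0 (by linarith [Real.pi_pos])
    have hcos : 0 < Real.cos t := Real.cos_pos_of_mem_Ioo ⟨by linarith [Real.pi_pos], htlt⟩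
    have hsin2 : Real.sin (2 * t) = 2 * Real.sin t * Real.cos t := Real.sin_two_mul t
    have hshift : Real.sin (t + π / 2) = Real.cos t := Real.sin_add_pi_div_two t
    simp only [g, hsin2, hshift]
    rw [show |2 * (2 * Real.sin t * Real.cos t)| = |2 * Real.sin t| * |2 * Real.cos t| by
      rw [← abs_mul]; ring_nf]
    rw [Real.log_mul (by rw [abs_ne_zero]; positivity) (by rw [abs_ne_zero]; positivity)]
  have hsplit : (∫ t in (0:ℝ)..x, g (2 * t)) = ∫ t in (0:ℝ)..x, (g t + g (t + π / 2)) :=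
    intervalIntegral.integral_congr_ae hae
  -- integrability of shifted
  have hshift_int : IntervalIntegrable (fun t => g (t + π / 2)) volume 0 x := by
    have := (subI (a := π/2) (b := x + π/2) (by linarith [Real.pi_pos])
      (by linarith) (by linarith) (by linarith)).comp_add_right (π / 2)
    simpa using this
  have hadd : (∫ t in (0:ℝ)..x, (g t + g (t + π / 2)))
      = (∫ t in (0:ℝ)..x, g t) + ∫ t in (0:ℝ)..x, g (t + π / 2) :=
    intervalIntegral.integral_add (subI le_rfl Real.pi_pos.le hx (by linarith)) hshift_int
  have hcomp : (∫ t in (0:ℝ)..x, g (t + π / 2)) = ∫ t in (0 + π/2 : ℝ)..(x + π/2), g t :=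
    intervalIntegral.integral_comp_add_right g (π / 2)
  have hadj : (∫ t in (0:ℝ)..(π/2), g t) + ∫ t in (π/2 : ℝ)..(x + π/2), g t
      = ∫ t in (0:ℝ)..(x + π/2), g t :=
    intervalIntegral.integral_add_adjacent_intervals
      (subI le_rfl Real.pi_pos.le (by linarith [Real.pi_pos]) (by linarith))
      (subI (by linarith [Real.pi_pos]) (by linarith) (by linarith) (by linarith))
  simp only [lob_eq]
  rw [zero_add] at hcomp
  rw [mul_zero] at h1
  rw [hsplit, hadd, hcomp] at h1
  rw [smul_eq_mul] at h1
  linarith [h1, hadj]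

lemma lob_pi : lob π = 0 := by
  have := dup (x := π / 2) (by linarith [Real.pi_pos]) le_rfl
  rw [show 2 * (π / 2) = π by ring, show π / 2 + π / 2 = π by ring] at this
  linarith

lemma lob_half : lob (π / 2) = 0 := by
  have := lob_pi_sub (y := π / 2) (by linarith [Real.pi_pos]) (by linarith [Real.pi_pos])
  rw [show π - π / 2 = π / 2 by ring, lob_pi] at this
  linarith

lemma lob_third_pos : 0 < lob (π / 3) := by
  have hpi := Real.pi_pos
  have hadj : (∫ t in (0:ℝ)..(π/3), g t) + ∫ t in (π/3 : ℝ)..(π/2), g t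
      = ∫ t in (0:ℝ)..(π/2), g t :=
    intervalIntegral.integral_add_adjacent_intervals
      (subI le_rfl hpi.le (by linarith) (by linarith))
      (subI (by linarith) (by linarith) (by linarith) (by linarith))
  have hpos : 0 < ∫ t in (π/3 : ℝ)..(π/2), g t := by
    apply intervalIntegral.intervalIntegral_pos_of_pos_on
      (subI (by linarith) (by linarith) (by linarith) (by linarith))
    · intro t ht
      obtain ⟨ht1, ht2⟩ := ht
      have h3 : Real.sin (π / 3) < Real.sin t := by
        apply Real.strictMonoOn_sin _ _ ht1
        · exact ⟨by linarith, by linarith⟩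
        · exact ⟨by linarith, by linarith⟩
      rw [Real.sin_pi_div_three] at h3
      have hsqrt : 1 < Real.sqrt 3 := by
        nlinarith [Real.sq_sqrt (by norm_num : (3:ℝ) ≥ 0), Real.sqrt_nonneg 3]
      have habs : 1 < |2 * Real.sin t| := by
        rw [abs_of_pos (by nlinarith)]
        nlinarith
      exact Real.log_pos habs
    · linarith
  have hhalf : lob (π / 2) = 0 := lob_half
  simp only [lob_eq] at hhalf ⊢
  linarith



lemma step1 {s x x' : ℝ} (hs0 : 0 < s) (hsπ : s < π) (hx : 0 ≤ x) (hxx : x ≤ x')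
    (hx' : x' ≤ s / 2) :
    lob x + lob (s - x) ≤ lob x' + lob (s - x') ∧
      (x < x' → lob x + lob (s - x) < lob x' + lob (s - x')) := by
  have hM := pairMono hs0 hsπ
  have hmx : x ∈ Set.Icc 0 (s/2) := ⟨hx, le_trans hxx hx'⟩
  have hmx' : x' ∈ Set.Icc 0 (s/2) := ⟨le_trans hx hxx, hx'⟩
  constructor
  · exact hM.monotoneOn hmx hmx' hxx
  · intro hlt
    exact hM hmx hmx' hlt

lemma pairAux {u v : ℝ} (hu : 0 ≤ u) (huv : u + v = 2 * π / 3) (hle : u ≤ v) :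
    lob u + lob v ≤ 2 * lob (π / 3) ∧ (u ≠ π / 3 → lob u + lob v < 2 * lob (π / 3)) := by
  have hpi := Real.pi_pos
  have hu3 : u ≤ π / 3 := by linarith
  have h := step1 (s := 2 * π / 3) (x := u) (x' := π / 3)
    (by linarith) (by linarith) hu hu3 (by linarith)
  rw [show 2 * π / 3 - u = v from by linarith,
    show 2 * π / 3 - π / 3 = π / 3 from by ring] at h
  constructor
  · linarith [h.1]
  · intro hne
    have : u < π / 3 := lt_of_le_of_ne hu3 hne
    linarith [h.2 this]

lemma pair23 {u v : ℝ} (hu : 0 ≤ u) (hv : 0 ≤ v) (huv : u + v = 2 * π / 3) :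
    lob u + lob v ≤ 2 * lob (π / 3) ∧ (u ≠ π / 3 → lob u + lob v < 2 * lob (π / 3)) := by
  rcases le_total u v with h | h
  · exact pairAux hu huv h
  · have := pairAux hv (by linarith) h
    constructor
    · linarith [this.1]
    · intro hne
      have hvne : v ≠ π / 3 := fun hv3 => hne (by linarith)
      linarith [this.2 hvne]

lemma key {a b c : ℝ} (ha : 0 ≤ a) (hab : a ≤ b) (hbc : b ≤ c) (hsum : a + b + c = π) :
    lob a + lob b + lob c ≤ 3 * lob (π / 3) ∧
      (¬(a = π / 3 ∧ b = π / 3 ∧ c = π / 3) →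
        lob a + lob b + lob c < 3 * lob (π / 3)) := by
  have hpi := Real.pi_pos
  have hb0 : 0 ≤ b := le_trans ha hab
  have hc0 : 0 ≤ c := le_trans hb0 hbc
  have hc3 : π / 3 ≤ c := by linarith
  have ha3 : a ≤ π / 3 := by linarith
  by_cases hb : b = 0
  · have ha0 : a = 0 := le_antisymm (hb ▸ hab) ha
    have hcpi : c = π := by linarith
    rw [ha0, hcpi, lob_zero, lob_pi, hb, lob_zero]
    constructor
    · linarith [lob_third_pos]
    · intro _; linarith [lob_third_pos]
  · have hbpos : 0 < b := lt_of_le_of_ne hb0 (Ne.symm hb)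
    have hbhalf : b ≤ π / 2 := by linarith
    have hs0 : 0 < π - b := by linarith
    have hsπ : π - b < π := by linarith
    have hac : π - b = a + c := by linarith
    rcases le_or_gt (2 * π / 3) (π - b) with hcase | hcase
    · -- move a up to π/3 within pair (a, c)
      have h1 := step1 (s := π - b) (x := a) (x' := π / 3) hs0 hsπ ha ha3 (by linarith)
      rw [show π - b - a = c from by linarith] at h1
      have h2 := pair23 (u := b) (v := π - b - π / 3) hb0 (by linarith)
        (by ring_nf)
      have hstrict : ¬(a = π / 3 ∧ b = π / 3 ∧ c = π / 3) → a < π / 3 := by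
        intro hne
        rcases lt_or_eq_of_le ha3 with h | h
        · exact h
        · exfalso; exact hne ⟨h, by linarith, by linarith⟩
      constructor
      · linarith [h1.1, h2.1]
      · intro hne
        linarith [h1.2 (hstrict hne), h2.1]
    · -- move c down to π/3 within pair (a, c)
      have h1 := step1 (s := π - b) (x := a) (x' := π - b - π / 3) hs0 hsπ ha
        (by linarith) (by linarith)
      rw [show π - b - a = c from by linarith,
        show π - b - (π - b - π / 3) = π / 3 from by ring] at h1
      have h2 := pair23 (u := π - b - π / 3) (v := b) (by linarith) hb0 (by ring_nf)
      have hstrict : ¬(a = π / 3 ∧ b = π / 3 ∧ c = π / 3) → a < π - b - π / 3 := by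
        intro hne
        rcases lt_or_eq_of_le hc3 with h | h
        · linarith
        · exfalso; exact hne ⟨by linarith, by linarith, by linarith⟩
      constructor
      · linarith [h1.1, h2.1]
      · intro hne
        linarith [h1.2 (hstrict hne), h2.1]

lemma face {a b c : ℝ} (ha : 0 ≤ a) (hb : 0 ≤ b) (hc : 0 ≤ c) (hsum : a + b + c = π) :
    lob a + lob b + lob c ≤ 3 * lob (π / 3) ∧
      (¬(a = π / 3 ∧ b = π / 3 ∧ c = π / 3) →
        lob a + lob b + lob c < 3 * lob (π / 3)) := by
  rcases le_total a b with h1 | h1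
  · rcases le_total b c with h2 | h2
    · exact key ha h1 h2 hsum
    · rcases le_total a c with h3 | h3
      · have := key ha h3 h2 (by linarith)
        exact ⟨by linarith [this.1], fun hne => by linarith [this.2 (by tauto)]⟩
      · have := key hc h3 h1 (by linarith)
        exact ⟨by linarith [this.1], fun hne => by linarith [this.2 (by tauto)]⟩
  · rcases le_total a c with h2 | h2
    · have := key hb h1 h2 (by linarith)
      exact ⟨by linarith [this.1], fun hne => by linarith [this.2 (by tauto)]⟩
    · rcases le_total b c with h3 | h3
      · have := key hb h3 h2 (by linarith)
        exact ⟨by linarith [this.1], fun hne => by linarith [this.2 (by tauto)]⟩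
      · have := key hc h3 h1 (by linarith)
        exact ⟨by linarith [this.1], fun hne => by linarith [this.2 (by tauto)]⟩


lemma cpos {p q x y : ℝ} (hp : 0 ≤ p) (hq : 0 ≤ q) (hpq : p + q = 1) (hx : 0 < x)
    (hy : 0 < y) : 0 < p * x + q * y := by
  rcases eq_or_lt_of_le hp with h | h
  · have hq1 : q = 1 := by linarith
    rw [← h, hq1]; simpa using hy
  · have h1 := mul_pos h hx
    have h2 := mul_nonneg hq hy.le
    linarith


end LobAux

theorem angle_structure_space (F : Type*) [Fintype F] :
    letI AT : Set (F → Fin 3 → ℝ) :=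
      {A | ∀ t, (0 < A t 0 ∧ 0 < A t 1 ∧ 0 < A t 2) ∧ A t 0 + A t 1 + A t 2 = Real.pi}
    letI energy : (F → Fin 3 → ℝ) → ℝ :=
      fun A => ∑ t, (lob (A t 0) + lob (A t 1) + lob (A t 2))
    AT.Nonempty ∧ Convex ℝ AT ∧ Bornology.IsBounded AT ∧
      ((fun _ _ => Real.pi / 3) ∈ closure AT ∧
        ∀ A ∈ closure AT, A ≠ (fun _ _ => Real.pi / 3) →
          energy A < energy (fun _ _ => Real.pi / 3)) := by
  have hpi := Real.pi_pos
  have hmem : (fun (_ : F) (_ : Fin 3) => Real.pi / 3) ∈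
      {A : F → Fin 3 → ℝ | ∀ t, (0 < A t 0 ∧ 0 < A t 1 ∧ 0 < A t 2) ∧
        A t 0 + A t 1 + A t 2 = Real.pi} :=
    fun t => ⟨⟨by linarith, by linarith, by linarith⟩, by ring⟩
  refine ⟨⟨_, hmem⟩, ?_, ?_, ?_, ?_⟩
  · -- Convex
    intro A hA B hB p q hp hq hpq
    intro t
    obtain ⟨⟨hA0, hA1, hA2⟩, hAs⟩ := hA t
    obtain ⟨⟨hB0, hB1, hB2⟩, hBs⟩ := hB t
    simp only [Pi.add_apply, Pi.smul_apply, smul_eq_mul]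
    refine ⟨⟨LobAux.cpos hp hq hpq hA0 hB0, LobAux.cpos hp hq hpq hA1 hB1, LobAux.cpos hp hq hpq hA2 hB2⟩, ?_⟩
    calc p * A t 0 + q * B t 0 + (p * A t 1 + q * B t 1) + (p * A t 2 + q * B t 2)
        = p * (A t 0 + A t 1 + A t 2) + q * (B t 0 + B t 1 + B t 2) := by ring
      _ = p * Real.pi + q * Real.pi := by rw [hAs, hBs]
      _ = Real.pi := by rw [← add_mul, hpq, one_mul]
  · -- Bounded
    apply isBounded_iff_forall_norm_le.2
    refine ⟨Real.pi, fun A hA => ?_⟩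
    rw [pi_norm_le_iff_of_nonneg hpi.le]
    intro t
    rw [pi_norm_le_iff_of_nonneg hpi.le]
    intro i
    obtain ⟨⟨h0, h1, h2⟩, hs⟩ := hA t
    rw [Real.norm_eq_abs, abs_le]
    fin_cases i <;> simp only [Fin.zero_eta, Fin.mk_one, Fin.reduceFinMk] <;>
      constructor <;> linarith
  · -- mem closure
    exact subset_closure hmem
  · -- maximum
    intro A hA hne
    have hclosed : IsClosed {B : F → Fin 3 → ℝ |
        ∀ t, (0 ≤ B t 0 ∧ 0 ≤ B t 1 ∧ 0 ≤ B t 2) ∧ B t 0 + B t 1 + B t 2 = Real.pi} := by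
      rw [Set.setOf_forall]
      apply isClosed_iInter
      intro t
      have e0 : Continuous fun B : F → Fin 3 → ℝ => B t 0 :=
        (continuous_apply (0 : Fin 3)).comp (continuous_apply t)
      have e1 : Continuous fun B : F → Fin 3 → ℝ => B t 1 :=
        (continuous_apply (1 : Fin 3)).comp (continuous_apply t)
      have e2 : Continuous fun B : F → Fin 3 → ℝ => B t 2 :=
        (continuous_apply (2 : Fin 3)).comp (continuous_apply t)
      simp only [Set.setOf_and]
      exact (((isClosed_le continuous_const e0).inter
        ((isClosed_le continuous_const e1).inter (isClosed_le continuous_const e2))).inter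
        (isClosed_eq ((e0.add e1).add e2) continuous_const))
    have hC : ∀ t, (0 ≤ A t 0 ∧ 0 ≤ A t 1 ∧ 0 ≤ A t 2) ∧
        A t 0 + A t 1 + A t 2 = Real.pi := by
      have hss : {B : F → Fin 3 → ℝ | ∀ t, (0 < B t 0 ∧ 0 < B t 1 ∧ 0 < B t 2) ∧
          B t 0 + B t 1 + B t 2 = Real.pi} ⊆ {B : F → Fin 3 → ℝ |
          ∀ t, (0 ≤ B t 0 ∧ 0 ≤ B t 1 ∧ 0 ≤ B t 2) ∧ B t 0 + B t 1 + B t 2 = Real.pi} :=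
        fun B hB t => ⟨⟨(hB t).1.1.le, (hB t).1.2.1.le, (hB t).1.2.2.le⟩, (hB t).2⟩
      exact closure_minimal hss hclosed hA
    have hne' : ∃ t i, A t i ≠ Real.pi / 3 := by
      by_contra h
      push_neg at h
      exact hne (funext fun t => funext fun i => h t i)
    obtain ⟨t₀, i₀, hi₀⟩ := hne'
    have hface : ∀ t : F, lob (A t 0) + lob (A t 1) + lob (A t 2) ≤ 3 * lob (Real.pi / 3) :=
      fun t => (LobAux.face (hC t).1.1 (hC t).1.2.1 (hC t).1.2.2 (hC t).2).1
    have hstrict : lob (A t₀ 0) + lob (A t₀ 1) + lob (A t₀ 2) < 3 * lob (Real.pi / 3) := by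
      apply (LobAux.face (hC t₀).1.1 (hC t₀).1.2.1 (hC t₀).1.2.2 (hC t₀).2).2
      rintro ⟨h0, h1, h2⟩
      apply hi₀
      fin_cases i₀ <;> simp only [Fin.zero_eta, Fin.mk_one, Fin.reduceFinMk] <;> assumption
    have hsum : ∑ t : F, (lob (A t 0) + lob (A t 1) + lob (A t 2)) <
        ∑ t : F, (lob (Real.pi / 3) + lob (Real.pi / 3) + lob (Real.pi / 3)) := by
      have h3 : ∀ t : F, (lob (Real.pi / 3) + lob (Real.pi / 3) + lob (Real.pi / 3)) =
          3 * lob (Real.pi / 3) := fun _ => by ring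
      calc ∑ t : F, (lob (A t 0) + lob (A t 1) + lob (A t 2))
          < ∑ t : F, 3 * lob (Real.pi / 3) :=
            Finset.sum_lt_sum (fun t _ => hface t) ⟨t₀, Finset.mem_univ t₀, hstrict⟩
        _ = _ := by
            apply Finset.sum_congr rfl
            intros; ring
    exact hsum
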